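/- Let g : ℝⁿ × ℝᵐ → ℝ be twice continuously differentiable and let s : ℝᵐ → ℝⁿ be differentiable, and suppose that for every w ∈ ℝᵐ the point s(w) is a critical point of g in the first variable: the partial derivative of g with respect to the first (ℝⁿ) variable vanishes at (s(w), w). Then the function h(w) := g(s(w), w) is twice differentiable and its second derivative is given, for all u, v ∈ ℝᵐ, by D²h(w)(u, v) = g_{ww}(u, v) − g_{ss}(Ds(w)·u, Ds(w)·v), where g_{ww} and g_{ss} denote the blocks of the Hessian of g at (s(w), w) acting on the second and first variables respectively, and Ds(w) is the derivative of s at w. (This is the real-coordinate content of formula (5.7): the Hessian of the reduced potential is the w-block of the Hessian of g minus the g_{ss}-quadratic form evaluated on the derivative of the critical section.) -/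

import Mathlib

/-- Formula (5.7) in real coordinates: if `s(w)` is a critical point of `g(·, w)` for
every `w`, then `h(w) = g(s(w), w)` is twice differentiable and its Hessian is the
`ww`-block of the Hessian of `g` minus the `ss`-block evaluated on `Ds(w)`. -/
theorem hessian_of_reduced_potential {n m : ℕ}
    (g : (Fin n → ℝ) × (Fin m → ℝ) → ℝ)
    (s : (Fin m → ℝ) → (Fin n → ℝ))
    (hg : ContDiff ℝ 2 g) (hs : Differentiable ℝ s)
    (hcrit : ∀ w : Fin m → ℝ, ∀ a : Fin n → ℝ, fderiv ℝ g (s w, w) (a, 0) = 0) :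
    Differentiable ℝ (fun w => g (s w, w)) ∧
    Differentiable ℝ (fderiv ℝ (fun w => g (s w, w))) ∧
    ∀ w u v : Fin m → ℝ,
      fderiv ℝ (fderiv ℝ (fun w => g (s w, w))) w u v =
        fderiv ℝ (fderiv ℝ g) (s w, w) ((0 : Fin n → ℝ), u) ((0 : Fin n → ℝ), v) -
          fderiv ℝ (fderiv ℝ g) (s w, w) (fderiv ℝ s w u, (0 : Fin m → ℝ))
            (fderiv ℝ s w v, (0 : Fin m → ℝ)) := by
  have hgd : Differentiable ℝ g := hg.differentiable (by norm_num)
  have hF : ContDiff ℝ 1 (fderiv ℝ g) := hg.fderiv_right le_rfl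
  have hFd : Differentiable ℝ (fderiv ℝ g) := hF.differentiable (by norm_num)
  set σ : (Fin m → ℝ) → (Fin n → ℝ) × (Fin m → ℝ) := fun w => (s w, w) with hσdef
  have hσ : Differentiable ℝ σ := hs.prodMk differentiable_id
  have hσf : ∀ w, fderiv ℝ σ w =
      (fderiv ℝ s w).prod (ContinuousLinearMap.id ℝ _) := by
    intro w
    rw [hσdef, DifferentiableAt.fderiv_prodMk (hs w) differentiableAt_fun_id, fderiv_id']
  have hh : Differentiable ℝ (fun w => g (s w, w)) := hgd.comp hσ
  set ι : (Fin m → ℝ) →L[ℝ] (Fin n → ℝ) × (Fin m → ℝ) :=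
    ContinuousLinearMap.inr ℝ _ _ with hι
  have hfd : ∀ w, fderiv ℝ (fun w => g (s w, w)) w = (fderiv ℝ g (σ w)).comp ι := by
    intro w
    have hc : fderiv ℝ (g ∘ σ) w = (fderiv ℝ g (σ w)).comp (fderiv ℝ σ w) :=
      fderiv_comp (x := w) (hgd (σ w)) (hσ w)
    have : (fun w => g (s w, w)) = g ∘ σ := rfl
    rw [this, hc]
    ext v
    simp only [ContinuousLinearMap.comp_apply, hσf w, ContinuousLinearMap.prod_apply,
      ContinuousLinearMap.id_apply, hι, ContinuousLinearMap.inr_apply]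
    have h2 : ((fderiv ℝ s w v : Fin n → ℝ), v)
        = (fderiv ℝ s w v, (0 : Fin m → ℝ)) + ((0 : Fin n → ℝ), v) := by
      simp [Prod.ext_iff]
    rw [h2, map_add, hcrit w _, zero_add]
  -- the map w ↦ fderiv g (σ w)
  have hFσ : Differentiable ℝ (fun w => fderiv ℝ g (σ w)) := hFd.comp hσ
  have hfd2 : Differentiable ℝ (fderiv ℝ (fun w => g (s w, w))) := by
    have : Differentiable ℝ (fun w => (fderiv ℝ g (σ w)).comp ι) :=
      hFσ.clm_comp (differentiable_const ι)
    exact fun x => ((this x).congr_of_eventuallyEq (Filter.Eventually.of_forall fun w => (hfd w)))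
  refine ⟨hh, hfd2, ?_⟩
  intro w u v
  -- compute fderiv of F ∘ σ
  have hFσf : fderiv ℝ (fun w => fderiv ℝ g (σ w)) w =
      (fderiv ℝ (fderiv ℝ g) (σ w)).comp (fderiv ℝ σ w) :=
    fderiv_comp (x := w) (hFd (σ w)) (hσ w)
  -- second derivative of h
  have key : fderiv ℝ (fderiv ℝ (fun w => g (s w, w))) w u v =
      fderiv ℝ (fderiv ℝ g) (σ w) (fderiv ℝ s w u, u) (0, v) := by
    have e1 : fderiv ℝ (fun w => g (s w, w)) = fun w => (fderiv ℝ g (σ w)).comp ι :=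
      funext hfd
    rw [e1]
    set e : ((Fin n → ℝ) × (Fin m → ℝ) →L[ℝ] ℝ) →L[ℝ] ((Fin m → ℝ) →L[ℝ] ℝ) :=
      (ContinuousLinearMap.compL ℝ (Fin m → ℝ) ((Fin n → ℝ) × (Fin m → ℝ)) ℝ).flip ι with he
    have e2 : (fun w => (fderiv ℝ g (σ w)).comp ι)
        = fun w => e (fderiv ℝ g (σ w)) := rfl
    rw [e2]
    have h3 : HasFDerivAt (fun w => e (fderiv ℝ g (σ w)))
        (e.comp (fderiv ℝ (fun w => fderiv ℝ g (σ w)) w)) w :=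
      e.hasFDerivAt.comp w (hFσ w).hasFDerivAt
    rw [h3.fderiv]
    simp only [ContinuousLinearMap.comp_apply, hFσf, hσf w,
      ContinuousLinearMap.prod_apply, ContinuousLinearMap.id_apply, he,
      ContinuousLinearMap.flip_apply, ContinuousLinearMap.compL_apply, hι,
      ContinuousLinearMap.inr_apply]
  -- differentiated criticality: D²g(σ w)(Ds w x, x)(a, 0) = 0
  have hcrit2 : ∀ (x : Fin m → ℝ) (a : Fin n → ℝ),
      fderiv ℝ (fderiv ℝ g) (σ w) (fderiv ℝ s w x, x) (a, 0) = 0 := by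
    intro x a
    set ev : ((Fin n → ℝ) × (Fin m → ℝ) →L[ℝ] ℝ) →L[ℝ] ℝ :=
      ContinuousLinearMap.apply ℝ ℝ ((a, 0) : (Fin n → ℝ) × (Fin m → ℝ)) with hev
    have hψ : (fun w' => ev (fderiv ℝ g (σ w'))) = fun _ => (0 : ℝ) := by
      funext w'
      simpa [hev] using hcrit w' a
    have h4 : HasFDerivAt (fun w' => ev (fderiv ℝ g (σ w')))
        (ev.comp (fderiv ℝ (fun w' => fderiv ℝ g (σ w')) w)) w :=
      ev.hasFDerivAt.comp w (hFσ w).hasFDerivAt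
    have h5 : ev.comp (fderiv ℝ (fun w' => fderiv ℝ g (σ w')) w) = 0 := by
      rw [← h4.fderiv, hψ]
      exact fderiv_const_apply 0
    have := congrArg (fun L => L x) h5
    simpa [hFσf, hσf w, hev] using this
  -- symmetry of the second derivative of g
  have hsym : ∀ p q, fderiv ℝ (fderiv ℝ g) (σ w) p q = fderiv ℝ (fderiv ℝ g) (σ w) q p := by
    intro p q
    exact second_derivative_symmetric (fun y => (hgd y).hasFDerivAt)
      ((hFd (σ w)).hasFDerivAt) p q
  rw [key]
  have hsplit : ((fderiv ℝ s w u : Fin n → ℝ), u)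
      = (fderiv ℝ s w u, (0 : Fin m → ℝ)) + ((0 : Fin n → ℝ), u) := by
    simp [Prod.ext_iff]
  rw [hsplit, map_add, ContinuousLinearMap.add_apply]
  have hterm : fderiv ℝ (fderiv ℝ g) (σ w) (fderiv ℝ s w u, (0 : Fin m → ℝ)) (0, v)
      = - fderiv ℝ (fderiv ℝ g) (σ w) (fderiv ℝ s w u, (0 : Fin m → ℝ))
          (fderiv ℝ s w v, (0 : Fin m → ℝ)) := by
    have h6 := hcrit2 v (fderiv ℝ s w u)
    rw [hsym _ (fderiv ℝ s w u, (0 : Fin m → ℝ))] at h6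
    have hsplit2 : ((fderiv ℝ s w v : Fin n → ℝ), v)
        = (fderiv ℝ s w v, (0 : Fin m → ℝ)) + ((0 : Fin n → ℝ), v) := by
      simp [Prod.ext_iff]
    rw [hsplit2, map_add] at h6
    linarith [h6]
  rw [hterm]
  ring
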